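/- Let C be a conjugation on a complex Hilbert space H. A rank-one operator x ⊗ y is C-symmetric (C(x ⊗ y)C = (x ⊗ y)*) if and only if it has the form α·(h ⊗ Ch) for some h ∈ H and α ∈ ℂ. -/
import Mathlib


open scoped InnerProductSpace ComplexConjugate

/-- The rank-one operator `x ⊗ y`, acting by `z ↦ ⟨z, y⟩ • x`. -/
noncomputable def rankOne {H : Type*} [NormedAddCommGroup H] [InnerProductSpace ℂ H]
    (x y : H) : H →L[ℂ] H :=
  (ContinuousLinearMap.toSpanSingleton ℂ x).comp (innerSL ℂ y)

lemma rankOne_apply' {H : Type*} [NormedAddCommGroup H] [InnerProductSpace ℂ H]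
    (x y z : H) : rankOne x y z = ⟪y, z⟫_ℂ • x := rfl

lemma rankOne_adjoint' {H : Type*} [NormedAddCommGroup H] [InnerProductSpace ℂ H]
    [CompleteSpace H] (x y : H) :
    ContinuousLinearMap.adjoint (rankOne x y) = rankOne y x := by
  symm
  rw [ContinuousLinearMap.eq_adjoint_iff]
  intro u v
  simp only [rankOne_apply', inner_smul_left, inner_smul_right, inner_conj_symm]
  ring

theorem stmt5 {H : Type*} [NormedAddCommGroup H] [InnerProductSpace ℂ H] [CompleteSpace H]
    (C : H → H)
    (hCadd : ∀ x y, C (x + y) = C x + C y)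
    (hCsmul : ∀ (a : ℂ) (x : H), C (a • x) = (starRingEnd ℂ) a • C x)
    (hCinner : ∀ x y : H, ⟪C x, C y⟫_ℂ = ⟪y, x⟫_ℂ)
    (hCinv : ∀ x, C (C x) = x)
    (x y : H) :
    (∀ z, C ((rankOne x y) (C z)) = (ContinuousLinearMap.adjoint (rankOne x y)) z) ↔
      ∃ (α : ℂ) (w : H), rankOne x y = α • rankOne w (C w) := by
  constructor
  · intro h
    by_cases hx : x = 0
    · refine ⟨0, 0, ?_⟩
      ext z
      simp [rankOne_apply', hx]
    · have hxx : ⟪x, x⟫_ℂ ≠ 0 := inner_self_ne_zero.mpr hx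
      have hx2 : (starRingEnd ℂ) ⟪y, C x⟫_ℂ • C x = ⟪x, x⟫_ℂ • y := by
        have := h x
        rw [rankOne_adjoint', rankOne_apply', rankOne_apply', hCsmul] at this
        exact this
      set c : ℂ := (starRingEnd ℂ) ⟪y, C x⟫_ℂ / ⟪x, x⟫_ℂ with hc
      have hy : y = c • C x := by
        rw [hc, div_eq_mul_inv, mul_comm, mul_smul, hx2, smul_smul,
          inv_mul_cancel₀ hxx, one_smul]
      refine ⟨(starRingEnd ℂ) c, x, ?_⟩
      ext z
      simp only [rankOne_apply', ContinuousLinearMap.smul_apply, hy, inner_smul_left,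
        smul_smul]
  · rintro ⟨α, w, hw⟩ z
    rw [hw]
    rw [map_smulₛₗ, ContinuousLinearMap.smul_apply, ContinuousLinearMap.smul_apply,
      rankOne_adjoint', rankOne_apply', rankOne_apply', hCsmul, hCsmul, hCinner,
      ← inner_conj_symm w z]
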